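/- Gaussian-moment exponential series bound: if a real random variable Y satisfies E(|Y|^m)^{1/m} ≤ b(2m)² σ₁ for every integer m ≥ 1, where b(2m)^{2m} = (2m)!/(m!2^m), then for every 0 ≤ s < 1/(2σ₁), E(exp(sY)) ≤ 1/√(1 − 2sσ₁). -/

import Mathlib

open MeasureTheory Real

open Finset ENNReal

noncomputable def gc (m : ℕ) : ℝ := (Nat.factorial (2*m) : ℝ) / ((Nat.factorial m)^2 * 2^m)

lemma gc_pos (m : ℕ) : 0 < gc m := by unfold gc; positivity

lemma gc_zero : gc 0 = 1 := by simp [gc]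

lemma gc_succ (m : ℕ) : ((m:ℝ)+1) * gc (m+1) = (2*(m:ℝ)+1) * gc m := by
  unfold gc
  have h1 : 2*(m+1) = (2*m+1)+1 := by ring
  rw [h1, Nat.factorial_succ, Nat.factorial_succ, Nat.factorial_succ]
  have h2 : ((Nat.factorial m : ℝ)) ≠ 0 := by positivity
  push_cast
  field_simp
  ring

lemma gc_le (m : ℕ) : gc m ≤ 2^m := by
  induction m with
  | zero => simp [gc_zero]
  | succ n ih =>
    have h := gc_succ n
    have hn : (0:ℝ) < (n:ℝ)+1 := by positivity
    have hg : gc (n+1) = (2*(n:ℝ)+1)/((n:ℝ)+1) * gc n := by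
      field_simp; linarith [h]
    rw [hg]
    have h2 : (2*(n:ℝ)+1)/((n:ℝ)+1) ≤ 2 := by
      rw [div_le_iff₀ hn]; linarith
    calc (2*(n:ℝ)+1)/((n:ℝ)+1) * gc n ≤ 2 * gc n :=
          mul_le_mul_of_nonneg_right h2 (gc_pos n).le
      _ ≤ 2 * 2^n := by linarith [gc_pos n]
      _ = 2^(n+1) := by ring

lemma gc_weighted (k : ℕ) :
    2 * ∑ i ∈ range (k+1), (i:ℝ) * (gc i * gc (k-i))
      = (k:ℝ) * ∑ i ∈ range (k+1), gc i * gc (k-i) := by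
  have refl := Finset.sum_range_reflect (fun i => (i:ℝ) * (gc i * gc (k-i))) (k+1)
  have h1 : ∑ j ∈ range (k+1), ((k+1-1-j:ℕ):ℝ) * (gc (k+1-1-j) * gc (k-(k+1-1-j)))
      = ∑ j ∈ range (k+1), ((k:ℝ) - j) * (gc j * gc (k-j)) := by
    refine Finset.sum_congr rfl fun j hj => ?_
    have hj' : j ≤ k := by simpa [Nat.lt_succ_iff] using hj
    have e1 : k+1-1-j = k - j := by omega
    have e2 : k - (k - j) = j := Nat.sub_sub_self hj'
    rw [e1, e2, Nat.cast_sub hj']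
    ring
  rw [h1] at refl
  have : ∑ j ∈ range (k+1), ((k:ℝ) - j) * (gc j * gc (k-j))
      + ∑ j ∈ range (k+1), (j:ℝ) * (gc j * gc (k-j))
      = (k:ℝ) * ∑ i ∈ range (k+1), gc i * gc (k-i) := by
    rw [← Finset.sum_add_distrib, Finset.mul_sum]
    exact Finset.sum_congr rfl fun j hj => by ring
  linarith [refl, this]

lemma gc_conv (k : ℕ) : ∑ i ∈ range (k+1), gc i * gc (k-i) = 2^k := by
  induction k with
  | zero => simp [gc_zero]
  | succ k ih =>
    have hw := gc_weighted (k+1)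
    have hshift : ∑ i ∈ range (k+2), (i:ℝ) * (gc i * gc (k+1-i))
        = ∑ j ∈ range (k+1), ((j:ℝ)+1) * (gc (j+1) * gc (k-j)) := by
      rw [Finset.sum_range_succ' (fun i => (i:ℝ) * (gc i * gc (k+1-i))) (k+1)]
      simp only [Nat.cast_zero, zero_mul, add_zero]
      refine Finset.sum_congr rfl fun j hj => ?_
      have : k+1-(j+1) = k-j := by omega
      rw [this]; push_cast; ring
    have hterm : ∑ j ∈ range (k+1), ((j:ℝ)+1) * (gc (j+1) * gc (k-j))
        = 2 * ∑ j ∈ range (k+1), (j:ℝ) * (gc j * gc (k-j))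
          + ∑ j ∈ range (k+1), gc j * gc (k-j) := by
      rw [Finset.mul_sum, ← Finset.sum_add_distrib]
      refine Finset.sum_congr rfl fun j hj => ?_
      have h := gc_succ j
      calc ((j:ℝ)+1) * (gc (j+1) * gc (k-j)) = (((j:ℝ)+1) * gc (j+1)) * gc (k-j) := by ring
        _ = ((2*(j:ℝ)+1) * gc j) * gc (k-j) := by rw [h]
        _ = 2 * ((j:ℝ) * (gc j * gc (k-j))) + gc j * gc (k-j) := by ring
    have hwk := gc_weighted k
    -- hw : 2 * Σ_{i<k+2} i f = (k+1) * Σ_{i<k+2} f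
    rw [hshift, hterm] at hw
    -- now hw : 2*(2*Σ j f + b k) = (k+1) * b(k+1)
    have hbk : ∑ i ∈ range (k+2), gc i * gc (k+1-i)
        = 2 * ∑ i ∈ range (k+1), gc i * gc (k-i) := by
      have hk1 : ((k:ℝ)+1) ≠ 0 := by positivity
      have : ((k:ℝ)+1) * (∑ i ∈ range (k+2), gc i * gc (k+1-i))
          = ((k:ℝ)+1) * (2 * ∑ i ∈ range (k+1), gc i * gc (k-i)) := by
        push_cast at hw ⊢
        nlinarith [hw, hwk]
      exact mul_left_cancel₀ hk1 this
    rw [hbk, ih]; ring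

lemma gc_summable {x : ℝ} (hx0 : 0 ≤ x) (hx : 2*x < 1) :
    Summable (fun m => gc m * x^m) := by
  refine Summable.of_nonneg_of_le (fun m => mul_nonneg (gc_pos m).le (pow_nonneg hx0 m))
    (fun m => ?_) (summable_geometric_of_lt_one (by linarith) hx)
  calc gc m * x^m ≤ 2^m * x^m :=
        mul_le_mul_of_nonneg_right (gc_le m) (by positivity)
    _ = (2*x)^m := by rw [mul_pow]

lemma gc_tsum {x : ℝ} (hx0 : 0 ≤ x) (hx : 2*x < 1) :
    ∑' m, gc m * x^m = 1 / Real.sqrt (1 - 2*x) := by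
  set S := ∑' m, gc m * x^m with hS
  have hsum := gc_summable hx0 hx
  have hnorm : Summable (fun m => ‖gc m * x^m‖) := by
    simpa [Real.norm_eq_abs, abs_mul, abs_pow] using hsum.abs
  have hsq : S * S = (1 - 2*x)⁻¹ := by
    rw [hS, tsum_mul_tsum_eq_tsum_sum_range_of_summable_norm hnorm hnorm]
    have : ∀ n : ℕ, ∑ k ∈ Finset.range (n+1), (gc k * x^k) * (gc (n-k) * x^(n-k))
        = (2*x)^n := by
      intro n
      have : ∀ k ∈ Finset.range (n+1), (gc k * x^k) * (gc (n-k) * x^(n-k))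
          = (gc k * gc (n-k)) * x^n := by
        intro k hk
        have hk' : k ≤ n := by simpa [Nat.lt_succ_iff] using hk
        rw [show (gc k * x^k) * (gc (n-k) * x^(n-k)) = (gc k * gc (n-k)) * (x^k * x^(n-k)) by ring,
          ← pow_add, Nat.add_sub_cancel' hk']
      rw [Finset.sum_congr rfl this, ← Finset.sum_mul, gc_conv, mul_pow]
    rw [tsum_congr this, tsum_geometric_of_lt_one (by linarith) hx]
  have hSnn : 0 ≤ S := tsum_nonneg (fun m => mul_nonneg (gc_pos m).le (pow_nonneg hx0 m))
  have h1 : (0:ℝ) < 1 - 2*x := by linarith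
  rw [show S = Real.sqrt (S * S) from (Real.sqrt_mul_self hSnn).symm, hsq,
    Real.sqrt_inv, one_div]


/-- Gaussian-moment exponential series bound: if `E(|Y|^m)^{1/m} ≤ b(2m)² σ₁` for every
`m ≥ 1`, where `b(2m)^{2m} = (2m)!/(m!2^m)` (so `b(2m)² = ((2m)!/(m!2^m))^{1/m}`), then
for every `0 ≤ s < 1/(2σ₁)`, `E(exp(sY)) ≤ 1/√(1 − 2sσ₁)`. -/
theorem exp_moment_from_gaussian_moments
    {Ω : Type*} [MeasurableSpace Ω] (μ : Measure Ω) [IsProbabilityMeasure μ]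
    (Y : Ω → ℝ) (hYmeas : Measurable Y) (σ₁ : ℝ) (hσ₁ : 0 < σ₁)
    (hmomInt : ∀ m : ℕ, Integrable (fun ω => |Y ω| ^ m) μ)
    (hmom : ∀ m : ℕ, 1 ≤ m →
      (∫ ω, |Y ω| ^ m ∂μ) ^ ((m : ℝ)⁻¹)
        ≤ ((Nat.factorial (2 * m) : ℝ) / (Nat.factorial m * 2 ^ m)) ^ ((m : ℝ)⁻¹) * σ₁)
    (hexpInt : ∀ s : ℝ, 0 ≤ s → s < 1 / (2 * σ₁) →
      Integrable (fun ω => Real.exp (s * Y ω)) μ) :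
    ∀ s : ℝ, 0 ≤ s → s < 1 / (2 * σ₁) →
      ∫ ω, Real.exp (s * Y ω) ∂μ ≤ 1 / Real.sqrt (1 - 2 * s * σ₁) := by
  intro s hs0 hs
  set x : ℝ := s * σ₁ with hxdef
  have hx0 : 0 ≤ x := mul_nonneg hs0 hσ₁.le
  have hx : 2 * x < 1 := by
    have h2 : s * (2 * σ₁) < 1 := by
      rwa [lt_div_iff₀ (by positivity)] at hs
    nlinarith
  -- the moment bound in power form
  have hM : ∀ m : ℕ, (∫ ω, |Y ω| ^ m ∂μ)
      ≤ (Nat.factorial (2 * m) : ℝ) / (Nat.factorial m * 2 ^ m) * σ₁ ^ m := by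
    intro m
    rcases Nat.eq_zero_or_pos m with hm | hm
    · subst hm
      simp
    · have hMnn : 0 ≤ ∫ ω, |Y ω| ^ m ∂μ :=
        integral_nonneg fun ω => by positivity
      have hBnn : (0:ℝ) ≤ (Nat.factorial (2 * m) : ℝ) / (Nat.factorial m * 2 ^ m) := by
        positivity
      have hmR : (0:ℝ) < (m : ℝ) := by exact_mod_cast hm
      have h := Real.rpow_le_rpow (Real.rpow_nonneg hMnn _) (hmom m hm) hmR.le
      rw [← Real.rpow_mul hMnn, inv_mul_cancel₀ hmR.ne', Real.rpow_one] at h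
      rw [Real.mul_rpow (Real.rpow_nonneg hBnn _) hσ₁.le, ← Real.rpow_mul hBnn,
        inv_mul_cancel₀ hmR.ne', Real.rpow_one, Real.rpow_natCast] at h
      exact h
  -- the term functions
  set f : ℕ → Ω → ℝ := fun m ω => s ^ m / (Nat.factorial m) * |Y ω| ^ m with hfdef
  have hfnn : ∀ m ω, 0 ≤ f m ω := fun m ω => by
    have : (0:ℝ) ≤ s ^ m / (Nat.factorial m) := by positivity
    exact mul_nonneg this (by positivity)
  have hfint : ∀ m, Integrable (f m) μ := fun m => (hmomInt m).const_mul _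
  have hfmeas : ∀ m, Measurable (f m) := fun m =>
    ((hYmeas.abs.pow_const m).const_mul _)
  have hIle : ∀ m, ∫ ω, f m ω ∂μ ≤ gc m * x ^ m := by
    intro m
    rw [hfdef]
    simp only
    rw [integral_const_mul]
    have h1 : s ^ m / (Nat.factorial m) * (∫ ω, |Y ω| ^ m ∂μ)
        ≤ s ^ m / (Nat.factorial m) *
          ((Nat.factorial (2 * m) : ℝ) / (Nat.factorial m * 2 ^ m) * σ₁ ^ m) := by
      apply mul_le_mul_of_nonneg_left (hM m) (by positivity)
    refine h1.trans (le_of_eq ?_)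
    rw [gc, hxdef]
    field_simp
    ring
  have hInn : ∀ m, 0 ≤ ∫ ω, f m ω ∂μ := fun m =>
    integral_nonneg fun ω => hfnn m ω
  have hIsum : Summable (fun m => ∫ ω, f m ω ∂μ) :=
    Summable.of_nonneg_of_le hInn hIle (gc_summable hx0 hx)
  -- pointwise expansion of exp(s |Y ω|)
  have hgsum : ∀ ω, HasSum (fun m => f m ω) (Real.exp (s * |Y ω|)) := by
    intro ω
    have he : (fun m => f m ω) = fun n => (s * |Y ω|) ^ n / (Nat.factorial n) := by
      funext n
      rw [hfdef]
      simp only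
      rw [mul_pow]
      ring
    rw [he, Real.exp_eq_exp_ℝ]
    exact NormedSpace.expSeries_div_hasSum_exp (s * |Y ω|)
  -- lintegral of each term
  have hlint : ∀ m, ∫⁻ ω, ‖f m ω‖₊ ∂μ = ENNReal.ofReal (∫ ω, f m ω ∂μ) := by
    intro m
    rw [MeasureTheory.ofReal_integral_eq_lintegral_ofReal (hfint m)
      (Filter.Eventually.of_forall (hfnn m))]
    refine lintegral_congr fun ω => ?_
    rw [← enorm_eq_nnnorm, ← ofReal_norm, Real.norm_of_nonneg (hfnn m ω)]
  have htsum_lint : ∑' m, ∫⁻ ω, ‖f m ω‖₊ ∂μ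
      = ENNReal.ofReal (∑' m, ∫ ω, f m ω ∂μ) := by
    rw [ENNReal.ofReal_tsum_of_nonneg hInn hIsum]
    exact tsum_congr hlint
  have hne : ∑' m, ∫⁻ ω, ‖f m ω‖₊ ∂μ ≠ ⊤ := by
    rw [htsum_lint]; exact ENNReal.ofReal_ne_top
  -- integral exchange
  have hexch : ∫ ω, (∑' m, f m ω) ∂μ = ∑' m, ∫ ω, f m ω ∂μ :=
    integral_tsum (fun m => (hfmeas m).aestronglyMeasurable) hne
  have hgeq : ∀ ω, (∑' m, f m ω) = Real.exp (s * |Y ω|) := fun ω => (hgsum ω).tsum_eq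
  -- integrability of exp (s * |Y ω|)
  have hgmeas : Measurable fun ω => Real.exp (s * |Y ω|) :=
    (hYmeas.abs.const_mul s).exp
  have hgint : Integrable (fun ω => Real.exp (s * |Y ω|)) μ := by
    refine ⟨hgmeas.aestronglyMeasurable, ?_⟩
    rw [hasFiniteIntegral_iff_norm]
    have heq : ∀ ω, ENNReal.ofReal ‖Real.exp (s * |Y ω|)‖ = ∑' m, (‖f m ω‖₊ : ℝ≥0∞) := by
      intro ω
      rw [Real.norm_of_nonneg (Real.exp_pos _).le, ← hgeq ω,
        ENNReal.ofReal_tsum_of_nonneg (fun m => hfnn m ω) (hgsum ω).summable]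
      refine tsum_congr fun m => ?_
      rw [← enorm_eq_nnnorm, ← ofReal_norm, Real.norm_of_nonneg (hfnn m ω)]
    calc ∫⁻ ω, ENNReal.ofReal ‖Real.exp (s * |Y ω|)‖ ∂μ
        = ∫⁻ ω, ∑' m, (‖f m ω‖₊ : ℝ≥0∞) ∂μ := lintegral_congr heq
      _ = ∑' m, ∫⁻ ω, (‖f m ω‖₊ : ℝ≥0∞) ∂μ :=
          lintegral_tsum fun m => ((hfmeas m).nnnorm.coe_nnreal_ennreal).aemeasurable
      _ < ⊤ := hne.lt_top
  -- main chain
  have hmono : ∫ ω, Real.exp (s * Y ω) ∂μ ≤ ∫ ω, Real.exp (s * |Y ω|) ∂μ := by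
    refine integral_mono (hexpInt s hs0 hs) hgint fun ω => ?_
    exact Real.exp_le_exp.2 (mul_le_mul_of_nonneg_left (le_abs_self _) hs0)
  have hval : ∫ ω, Real.exp (s * |Y ω|) ∂μ ≤ 1 / Real.sqrt (1 - 2 * x) := by
    have : ∫ ω, Real.exp (s * |Y ω|) ∂μ = ∑' m, ∫ ω, f m ω ∂μ := by
      rw [← hexch]
      exact integral_congr_ae (Filter.Eventually.of_forall fun ω => (hgeq ω).symm)
    rw [this, ← gc_tsum hx0 hx]
    exact Summable.tsum_le_tsum hIle hIsum (gc_summable hx0 hx)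
  have hfinal : (1:ℝ) - 2 * s * σ₁ = 1 - 2 * x := by rw [hxdef]; ring
  rw [hfinal]
  exact hmono.trans hval
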